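/- Let (A; G, H) be a (total) dynamic De Morgan algebra, i.e., G and H are everywhere-defined. Then the relation R_G on nonempty proper down-sets of A satisfies: both R_G and (R_G)⁻¹ are serial, and for every b ∈ A and every nonempty proper down-set D of A, κ_D(G(b)) = ⨅{ κ_E(b) : D R_G E } and κ_D(H(b)) = ⨅{ κ_E(b) : E R_G D }, both infima taken in M₂ (viewed as a complete lattice). -/
import Mathlib


/-- A down-set of a poset. -/
def IsDownSet {A : Type*} [PartialOrder A] (D : Set A) : Prop :=
  ∀ ⦃x y : A⦄, x ≤ y → y ∈ D → x ∈ D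

/-- A nonempty proper down-set of a poset. -/
def IsProperDownSet {A : Type*} [PartialOrder A] (D : Set A) : Prop :=
  D.Nonempty ∧ D ≠ Set.univ ∧ IsDownSet D

open Classical in
/-- `hD D a = false` iff `a ∈ D`. -/
noncomputable def hD {A : Type*} (D : Set A) (a : A) : Bool :=
  if a ∈ D then false else true

/-- `κ_D(a) = (h_D(a), h_D^∂(a))` where `h_D^∂(a) = ¬ h_D(a')`. -/
noncomputable def kappa {A : Type*} (neg : A → A) (D : Set A) (a : A) :
    Bool × Bool := (hD D a, ! hD D (neg a))

/-- The negation of the four-element De Morgan poset `M₂`: `(a,b)' = (¬b, ¬a)`. -/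
def negM2 (m : Bool × Bool) : Bool × Bool := (! m.2, ! m.1)

/-- The relation `R_G` on down-sets: `D R_G E` iff `κ_D(G x) ≤ κ_E(x)` for all `x ∈ dom G`. -/
def RG {A : Type*} (neg : A → A) (domG : Set A) (G : A → A) (D E : Set A) : Prop :=
  ∀ x ∈ domG, kappa neg D (G x) ≤ kappa neg E x

lemma hD_false_iff {A : Type*} {D : Set A} {a : A} : hD D a = false ↔ a ∈ D := by
  unfold hD; split <;> simp_all

lemma hD_true_iff {A : Type*} {D : Set A} {a : A} : hD D a = true ↔ a ∉ D := by
  unfold hD; split <;> simp_all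

lemma kappa_le_iff {A : Type*} (neg : A → A) (D E : Set A) (a b : A) :
    kappa neg D a ≤ kappa neg E b ↔ ((b ∈ E → a ∈ D) ∧ (neg a ∈ D → neg b ∈ E)) := by
  by_cases h1 : a ∈ D <;> by_cases h2 : b ∈ E <;> by_cases h3 : neg a ∈ D <;>
    by_cases h4 : neg b ∈ E <;>
    simp [kappa, hD, h1, h2, h3, h4, Prod.le_def]

/-- For a (total) dynamic De Morgan algebra `(A; G, H)`: the relation `R_G`
and its inverse are serial, and for every `b ∈ A` and nonempty proper down-set
`D`, `κ_D(G(b)) = ⨅ {κ_E(b) : D R_G E}` and `κ_D(H(b)) = ⨅ {κ_E(b) : E R_G D}`. -/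
theorem stmt_15 {A : Type*} [PartialOrder A] [BoundedOrder A]
    (neg : A → A)
    (hanti : ∀ a b : A, a ≤ b → neg b ≤ neg a)
    (hinv : ∀ a : A, neg (neg a) = a)
    (G H : A → A)
    -- (P1)
    (hG0 : G ⊥ = ⊥) (hG1 : G ⊤ = ⊤) (hH0 : H ⊥ = ⊥) (hH1 : H ⊤ = ⊤)
    -- (P2)
    (hP2G : Monotone G) (hP2H : Monotone H)
    -- (P3)
    (hP3G : ∀ x : A, x ≤ G (neg (H (neg x))))
    (hP3H : ∀ x : A, x ≤ H (neg (G (neg x))))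
    -- (P4)
    (hP4G : ∀ x y : A, x ≤ y → G x ≤ neg (G (neg y)))
    (hP4H : ∀ x y : A, x ≤ y → H x ≤ neg (H (neg y))) :
    (∀ D : Set A, IsProperDownSet D →
      ∃ E : Set A, IsProperDownSet E ∧ RG neg Set.univ G D E) ∧
    (∀ D : Set A, IsProperDownSet D →
      ∃ E : Set A, IsProperDownSet E ∧ RG neg Set.univ G E D) ∧
    (∀ (b : A) (D : Set A), IsProperDownSet D →
      kappa neg D (G b) =
        sInf {m : Bool × Bool |
          ∃ E : Set A, IsProperDownSet E ∧ RG neg Set.univ G D E ∧ m = kappa neg E b} ∧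
      kappa neg D (H b) =
        sInf {m : Bool × Bool |
          ∃ E : Set A, IsProperDownSet E ∧ RG neg Set.univ G E D ∧ m = kappa neg E b}) := by
  -- basic facts
  have negtop : neg ⊤ = ⊥ := by
    have h := hanti (neg ⊥) ⊤ le_top
    rw [hinv] at h
    exact le_antisymm h bot_le
  have negbot : neg ⊥ = ⊤ := by rw [← negtop, hinv]
  have botmem : ∀ {D : Set A}, IsProperDownSet D → ⊥ ∈ D := by
    rintro D ⟨⟨a, ha⟩, -, hdown⟩; exact hdown bot_le ha
  have topnmem : ∀ {D : Set A}, IsProperDownSet D → ⊤ ∉ D := by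
    rintro D ⟨-, hne, hdown⟩ htop
    exact hne (Set.eq_univ_of_forall fun x => hdown le_top htop)
  have lemG1 : ∀ b, neg b ≤ G (neg (H b)) := by
    intro b; have h := hP3G (neg b); rwa [hinv] at h
  have lemG2 : ∀ b, neg (G (neg (H b))) ≤ b := by
    intro b; have h := hanti _ _ (lemG1 b); rwa [hinv] at h
  have lemH1 : ∀ b, neg b ≤ H (neg (G b)) := by
    intro b; have h := hP3H (neg b); rwa [hinv] at h
  have lemH2 : ∀ b, neg (H (neg (G b))) ≤ b := by
    intro b; have h := hanti _ _ (lemH1 b); rwa [hinv] at h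
  have lemHG : ∀ b, H (G b) ≤ b := fun b =>
    le_trans (hP4H (G b) (G b) le_rfl) (lemH2 b)
  have lemGG : ∀ b, G b ≤ neg (G (neg b)) := fun b => hP4G b b le_rfl
  -- characterization of RG
  have RG_iff : ∀ D E : Set A, RG neg Set.univ G D E ↔
      ∀ x, (x ∈ E → G x ∈ D) ∧ (neg (G x) ∈ D → neg x ∈ E) := by
    intro D E
    constructor
    · intro h x; exact (kappa_le_iff neg D E (G x) x).mp (h x (Set.mem_univ x))
    · intro h x _; exact (kappa_le_iff neg D E (G x) x).mpr (h x)
  -- forward witness S = {y | neg (G (neg y)) ∈ D}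
  have hS : ∀ D : Set A, IsProperDownSet D →
      IsProperDownSet {y | neg (G (neg y)) ∈ D} ∧
      RG neg Set.univ G D {y | neg (G (neg y)) ∈ D} := by
    intro D hD'
    have hdown := hD'.2.2
    refine ⟨⟨⟨⊥, ?_⟩, ?_, ?_⟩, ?_⟩
    · show neg (G (neg ⊥)) ∈ D
      rw [negbot, hG1, negtop]; exact botmem hD'
    · intro h
      have hm : ⊤ ∈ {y | neg (G (neg y)) ∈ D} := h ▸ Set.mem_univ ⊤
      rw [Set.mem_setOf_eq, negtop, hG0, negbot] at hm
      exact topnmem hD' hm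
    · intro x y hxy hy
      exact hdown (hanti _ _ (hP2G (hanti _ _ hxy))) hy
    · rw [RG_iff]
      intro x
      constructor
      · intro hx; exact hdown (lemGG x) hx
      · intro hx; show neg (G (neg (neg x))) ∈ D; rwa [hinv]
  -- forward witness T = {y | G y ∈ D}
  have hT : ∀ D : Set A, IsProperDownSet D →
      IsProperDownSet {y | G y ∈ D} ∧ RG neg Set.univ G D {y | G y ∈ D} := by
    intro D hD'
    have hdown := hD'.2.2
    refine ⟨⟨⟨⊥, ?_⟩, ?_, ?_⟩, ?_⟩
    · show G ⊥ ∈ D; rw [hG0]; exact botmem hD'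
    · intro h
      have hm : ⊤ ∈ {y | G y ∈ D} := h ▸ Set.mem_univ ⊤
      rw [Set.mem_setOf_eq, hG1] at hm
      exact topnmem hD' hm
    · intro x y hxy hy; exact hdown (hP2G hxy) hy
    · rw [RG_iff]
      intro x
      refine ⟨fun hx => hx, fun hx => ?_⟩
      show G (neg x) ∈ D
      have h1 : G (neg x) ≤ neg (G x) := by
        have h2 := lemGG (neg x); rwa [hinv] at h2
      exact hdown h1 hx
  -- backward witness E1 = down-closure of G '' D
  have hE1sub : ∀ D : Set A, IsProperDownSet D →
      ∀ z ∈ {z | ∃ x ∈ D, z ≤ G x}, ∀ w, neg (G w) ≤ z → neg w ∈ D := by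
    rintro D hD' z ⟨x, hx, hz⟩ w hw
    exact hD'.2.2 (le_trans (lemH1 w) (le_trans (hP2H (le_trans hw hz)) (lemHG x))) hx
  have hE1 : ∀ D : Set A, IsProperDownSet D →
      IsProperDownSet {z | ∃ x ∈ D, z ≤ G x} ∧
      RG neg Set.univ G {z | ∃ x ∈ D, z ≤ G x} D := by
    intro D hD'
    obtain ⟨a, ha⟩ := hD'.1
    refine ⟨⟨⟨G a, a, ha, le_rfl⟩, ?_, ?_⟩, ?_⟩
    · intro h
      have hm : ⊤ ∈ {z : A | ∃ x ∈ D, z ≤ G x} := h ▸ Set.mem_univ ⊤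
      obtain ⟨x, hx, hle⟩ := hm
      have hGx : G x = ⊤ := le_antisymm le_top hle
      refine topnmem hD' (hD'.2.2 ?_ hx)
      calc (⊤ : A) = H ⊤ := hH1.symm
        _ = H (G x) := by rw [hGx]
        _ ≤ x := lemHG x
    · rintro x y hxy ⟨w, hw, hyw⟩; exact ⟨w, hw, le_trans hxy hyw⟩
    · rw [RG_iff]
      intro x
      refine ⟨fun hx => ⟨x, hx, le_rfl⟩, fun hx => ?_⟩
      exact hE1sub D hD' _ hx x le_rfl
  -- backward witness E2 = {z | ∀ x, neg (G x) ≤ z → neg x ∈ D}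
  have hE2 : ∀ D : Set A, IsProperDownSet D →
      IsProperDownSet {z | ∀ x, neg (G x) ≤ z → neg x ∈ D} ∧
      RG neg Set.univ G {z | ∀ x, neg (G x) ≤ z → neg x ∈ D} D := by
    intro D hD'
    obtain ⟨a, ha⟩ := hD'.1
    refine ⟨⟨⟨G a, fun w hw => hE1sub D hD' _ ⟨a, ha, le_rfl⟩ w hw⟩, ?_, ?_⟩, ?_⟩
    · intro h
      have hm : ⊤ ∈ {z : A | ∀ x, neg (G x) ≤ z → neg x ∈ D} := h ▸ Set.mem_univ ⊤
      have := hm (neg ⊤) le_top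
      rw [hinv] at this
      exact topnmem hD' this
    · intro x y hxy hy w hw; exact hy w (le_trans hw hxy)
    · rw [RG_iff]
      intro x
      constructor
      · intro hx w hw; exact hE1sub D hD' _ ⟨x, hx, hw⟩ w le_rfl
      · intro hx
        have h := hx x le_rfl
        exact h
  refine ⟨fun D hD' => ⟨_, (hS D hD').1, (hS D hD').2⟩,
          fun D hD' => ⟨_, (hE1 D hD').1, (hE1 D hD').2⟩, ?_⟩
  intro b D hD'
  constructor
  · -- kappa D (G b) = sInf
    apply le_antisymm
    · apply le_sInf
      rintro m ⟨E, hE', hR, rfl⟩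
      exact hR b (Set.mem_univ b)
    · rw [Prod.le_def]
      constructor
      · -- first coordinate
        by_cases hGb : G b ∈ D
        · have hw : kappa neg {y | G y ∈ D} b ∈
              {m : Bool × Bool | ∃ E : Set A, IsProperDownSet E ∧
                RG neg Set.univ G D E ∧ m = kappa neg E b} :=
            ⟨_, (hT D hD').1, (hT D hD').2, rfl⟩
          refine le_trans (sInf_le hw).1 ?_
          have h1 : (kappa neg {y | G y ∈ D} b).1 = false := hD_false_iff.mpr hGb
          have h2 : (kappa neg D (G b)).1 = false := hD_false_iff.mpr hGb
          rw [h1, h2]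
        · have h2 : (kappa neg D (G b)).1 = true := hD_true_iff.mpr hGb
          rw [h2]; exact Bool.le_true _
      · -- second coordinate
        by_cases hGb : neg (G b) ∈ D
        · have h2 : (kappa neg D (G b)).2 = true := by
            show (! hD D (neg (G b))) = true
            rw [hD_false_iff.mpr hGb]; rfl
          rw [h2]; exact Bool.le_true _
        · have hw : kappa neg {y | neg (G (neg y)) ∈ D} b ∈
              {m : Bool × Bool | ∃ E : Set A, IsProperDownSet E ∧
                RG neg Set.univ G D E ∧ m = kappa neg E b} :=
            ⟨_, (hS D hD').1, (hS D hD').2, rfl⟩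
          refine le_trans (sInf_le hw).2 ?_
          have hmem : neg b ∉ {y | neg (G (neg y)) ∈ D} := by
            rw [Set.mem_setOf_eq, hinv]; exact hGb
          have h1 : (kappa neg {y | neg (G (neg y)) ∈ D} b).2 = false := by
            show (! hD {y | neg (G (neg y)) ∈ D} (neg b)) = false
            rw [hD_true_iff.mpr hmem]; rfl
          have h2 : (kappa neg D (G b)).2 = false := by
            show (! hD D (neg (G b))) = false
            rw [hD_true_iff.mpr hGb]; rfl
          rw [h1, h2]
  · -- kappa D (H b) = sInf
    apply le_antisymm
    · apply le_sInf
      rintro m ⟨E, hE', hR, rfl⟩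
      rw [RG_iff] at hR
      rw [kappa_le_iff]
      constructor
      · intro hb
        have h1 : neg (G (neg (H b))) ∈ E := hE'.2.2 (lemG2 b) hb
        have h2 := (hR (neg (H b))).2 h1
        rwa [hinv] at h2
      · intro hb
        have h1 : G (neg (H b)) ∈ E := (hR (neg (H b))).1 hb
        exact hE'.2.2 (lemG1 b) h1
    · rw [Prod.le_def]
      constructor
      · by_cases hHb : H b ∈ D
        · have hbE2 : b ∈ {z | ∀ x, neg (G x) ≤ z → neg x ∈ D} := by
            intro w hw
            exact hD'.2.2 (le_trans (lemH1 w) (hP2H hw)) hHb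
          have hw : kappa neg {z | ∀ x, neg (G x) ≤ z → neg x ∈ D} b ∈
              {m : Bool × Bool | ∃ E : Set A, IsProperDownSet E ∧
                RG neg Set.univ G E D ∧ m = kappa neg E b} :=
            ⟨_, (hE2 D hD').1, (hE2 D hD').2, rfl⟩
          refine le_trans (sInf_le hw).1 ?_
          have h1 : (kappa neg {z | ∀ x, neg (G x) ≤ z → neg x ∈ D} b).1 = false :=
            hD_false_iff.mpr hbE2
          have h2 : (kappa neg D (H b)).1 = false := hD_false_iff.mpr hHb
          rw [h1, h2]
        · have h2 : (kappa neg D (H b)).1 = true := hD_true_iff.mpr hHb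
          rw [h2]; exact Bool.le_true _
      · by_cases hHb : neg (H b) ∈ D
        · have h2 : (kappa neg D (H b)).2 = true := by
            show (! hD D (neg (H b))) = true
            rw [hD_false_iff.mpr hHb]; rfl
          rw [h2]; exact Bool.le_true _
        · have hmem : neg b ∉ {z | ∃ x ∈ D, z ≤ G x} := by
            rintro ⟨x, hx, hle⟩
            apply hHb
            have h1 : neg x ≤ H b := by
              refine le_trans (lemH1 x) (hP2H ?_)
              have h3 := hanti _ _ hle
              rwa [hinv] at h3
            have h4 := hanti _ _ h1
            rw [hinv] at h4
            exact hD'.2.2 h4 hx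
          have hw : kappa neg {z | ∃ x ∈ D, z ≤ G x} b ∈
              {m : Bool × Bool | ∃ E : Set A, IsProperDownSet E ∧
                RG neg Set.univ G E D ∧ m = kappa neg E b} :=
            ⟨_, (hE1 D hD').1, (hE1 D hD').2, rfl⟩
          refine le_trans (sInf_le hw).2 ?_
          have h1 : (kappa neg {z | ∃ x ∈ D, z ≤ G x} b).2 = false := by
            show (! hD {z | ∃ x ∈ D, z ≤ G x} (neg b)) = false
            rw [hD_true_iff.mpr hmem]; rfl
          have h2 : (kappa neg D (H b)).2 = false := by
            show (! hD D (neg (H b))) = false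
            rw [hD_true_iff.mpr hHb]; rfl
          rw [h1, h2]
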